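/- arXiv:0906.5089 — 2 statements merged into one kernel-verified Lean document; each statement's English description precedes it below -/
import Mathlib

section
/- In the rooted case, there exists an index q ∈ [d] such that |A_q| ≥ 2|F_q|; in the unrooted case, there exist two distinct indices q, r ∈ [d] such that |A_{qr}| ≥ 2|F_{qr}|. -/
open Finset

attribute [local instance] Classical.propDecidable

/-- A rooted phylogenetic tree over the taxon set `Fin n`, encoded by its hierarchy of
clusters: for each node of the tree, the set of leaves descending from that node.
The conditions say that the whole leaf set and all singletons are clusters, the empty
set is not a cluster, and that the family is laminar.  Such families correspond exactly
to rooted phylogenies in which every internal node has at least two children. -/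
structure RTree (n : ℕ) where
  clusters : Finset (Finset (Fin n))
  univ_mem : Finset.univ ∈ clusters
  singleton_mem : ∀ x : Fin n, {x} ∈ clusters
  empty_not_mem : ∅ ∉ clusters
  laminar : ∀ C ∈ clusters, ∀ D ∈ clusters, C ⊆ D ∨ D ⊆ C ∨ C ∩ D = ∅

/-- All triplets (3-element subsets) of `Fin n`. -/
def triplets (n : ℕ) : Finset (Finset (Fin n)) :=
  Finset.powersetCard 3 Finset.univ

/-- The cluster family of the restriction `T|X`, for a rooted tree with cluster
family `F`: the nonempty intersections of clusters with `X`. -/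
noncomputable def famRestrict {n : ℕ} (F : Finset (Finset (Fin n))) (X : Finset (Fin n)) :
    Finset (Finset (Fin n)) :=
  (F.image (· ∩ X)).filter (· ≠ ∅)

/-- A triplet `X` is resolved in a rooted tree with cluster family `F` iff the
restriction `T|X` is fully resolved, equivalently iff some cluster contains exactly
two of the three elements of `X`. -/
def famResolved {n : ℕ} (F : Finset (Finset (Fin n))) (X : Finset (Fin n)) : Prop :=
  ∃ C ∈ F, (C ∩ X).card = 2

/-- Triplets resolved, identically, in both trees. -/
noncomputable def famSetS {n : ℕ} (F G : Finset (Finset (Fin n))) :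
    Finset (Finset (Fin n)) :=
  (triplets n).filter fun X =>
    famResolved F X ∧ famResolved G X ∧ famRestrict F X = famRestrict G X

/-- Triplets resolved, differently, in both trees. -/
noncomputable def famSetD {n : ℕ} (F G : Finset (Finset (Fin n))) :
    Finset (Finset (Fin n)) :=
  (triplets n).filter fun X =>
    famResolved F X ∧ famResolved G X ∧ famRestrict F X ≠ famRestrict G X

/-- Triplets resolved in the first tree but not in the second. -/
noncomputable def famSetR1 {n : ℕ} (F G : Finset (Finset (Fin n))) :
    Finset (Finset (Fin n)) :=
  (triplets n).filter fun X => famResolved F X ∧ ¬ famResolved G X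

/-- Triplets resolved in the second tree but not in the first. -/
noncomputable def famSetR2 {n : ℕ} (F G : Finset (Finset (Fin n))) :
    Finset (Finset (Fin n)) :=
  (triplets n).filter fun X => famResolved G X ∧ ¬ famResolved F X

/-- Triplets unresolved in both trees. -/
noncomputable def famSetU {n : ℕ} (F G : Finset (Finset (Fin n))) :
    Finset (Finset (Fin n)) :=
  (triplets n).filter fun X => ¬ famResolved F X ∧ ¬ famResolved G X

/-- The parametric triplet distance, at the level of cluster families. -/
noncomputable def famPdist {n : ℕ} (p : ℝ) (F G : Finset (Finset (Fin n))) : ℝ :=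
  ((famSetD F G).card : ℝ) +
    p * (((famSetR1 F G).card : ℝ) + ((famSetR2 F G).card : ℝ))

namespace RTree

variable {n : ℕ}

/-- The cluster family of the restriction `T|X`. -/
noncomputable def restrict (T : RTree n) (X : Finset (Fin n)) : Finset (Finset (Fin n)) :=
  famRestrict T.clusters X

/-- The triplet `X` is resolved in `T`, i.e. `T|X` is fully resolved. -/
def Resolved (T : RTree n) (X : Finset (Fin n)) : Prop :=
  famResolved T.clusters X

/-- A rooted phylogeny is fully resolved (all internal nodes have exactly two
children) iff every triplet is resolved in it. -/
def FullyResolved (T : RTree n) : Prop :=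
  ∀ X ∈ triplets n, T.Resolved X

noncomputable def setS (T₁ T₂ : RTree n) : Finset (Finset (Fin n)) :=
  famSetS T₁.clusters T₂.clusters

noncomputable def setD (T₁ T₂ : RTree n) : Finset (Finset (Fin n)) :=
  famSetD T₁.clusters T₂.clusters

noncomputable def setR1 (T₁ T₂ : RTree n) : Finset (Finset (Fin n)) :=
  famSetR1 T₁.clusters T₂.clusters

noncomputable def setR2 (T₁ T₂ : RTree n) : Finset (Finset (Fin n)) :=
  famSetR2 T₁.clusters T₂.clusters

noncomputable def setU (T₁ T₂ : RTree n) : Finset (Finset (Fin n)) :=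
  famSetU T₁.clusters T₂.clusters

/-- The parametric triplet distance `d⁽ᵖ⁾(T₁,T₂)`. -/
noncomputable def pdist (p : ℝ) (T₁ T₂ : RTree n) : ℝ :=
  famPdist p T₁.clusters T₂.clusters

theorem clusters_injective : Function.Injective (clusters (n := n)) := by
  rintro ⟨s₁, _, _, _, _⟩ ⟨s₂, _, _, _, _⟩ h
  simp only [mk.injEq] at h ⊢
  exact h

noncomputable instance : Fintype (RTree n) :=
  Fintype.ofInjective clusters clusters_injective

end RTree

/-- An unrooted phylogenetic tree over the taxon set `Fin n`, encoded by its split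
system: the collection of all sets of leaves lying on one side of some edge of the
tree.  By the splits-equivalence (Buneman) theorem, the families satisfying these
conditions (all trivial splits present, closure under complementation, pairwise
compatibility) correspond exactly to unrooted phylogenies in which every internal
node has degree at least three. -/
structure UTree (n : ℕ) where
  splits : Finset (Finset (Fin n))
  empty_not_mem : ∅ ∉ splits
  trivial_mem : ∀ x : Fin n, ({x} : Finset (Fin n)) = Finset.univ ∨ {x} ∈ splits
  compl_mem : ∀ A ∈ splits, Finset.univ \ A ∈ splits
  compat : ∀ A ∈ splits, ∀ B ∈ splits, A ⊆ B ∨ B ⊆ A ∨ A ∩ B = ∅ ∨ A ∪ B = Finset.univ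

/-- All quartets (4-element subsets) of `Fin n`. -/
def quartets (n : ℕ) : Finset (Finset (Fin n)) :=
  Finset.powersetCard 4 Finset.univ

/-- The split system of the restriction `T|X`, for an unrooted tree with split
system `F`: the proper nonempty intersections of split sides with `X`. -/
noncomputable def famRestrictU {n : ℕ} (F : Finset (Finset (Fin n))) (X : Finset (Fin n)) :
    Finset (Finset (Fin n)) :=
  (F.image (· ∩ X)).filter fun A => A ≠ ∅ ∧ A ≠ X

/-- A quartet `X` is resolved in an unrooted tree with split system `F` iff the
restriction `T|X` is fully resolved, equivalently iff some split side contains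
exactly two of the four elements of `X`. -/
def famResolvedU {n : ℕ} (F : Finset (Finset (Fin n))) (X : Finset (Fin n)) : Prop :=
  ∃ A ∈ F, (A ∩ X).card = 2

/-- Quartets resolved, identically, in both trees. -/
noncomputable def famSetSU {n : ℕ} (F G : Finset (Finset (Fin n))) :
    Finset (Finset (Fin n)) :=
  (quartets n).filter fun X =>
    famResolvedU F X ∧ famResolvedU G X ∧ famRestrictU F X = famRestrictU G X

/-- Quartets resolved, differently, in both trees. -/
noncomputable def famSetDU {n : ℕ} (F G : Finset (Finset (Fin n))) :
    Finset (Finset (Fin n)) :=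
  (quartets n).filter fun X =>
    famResolvedU F X ∧ famResolvedU G X ∧ famRestrictU F X ≠ famRestrictU G X

/-- Quartets resolved in the first tree but not in the second. -/
noncomputable def famSetR1U {n : ℕ} (F G : Finset (Finset (Fin n))) :
    Finset (Finset (Fin n)) :=
  (quartets n).filter fun X => famResolvedU F X ∧ ¬ famResolvedU G X

/-- Quartets resolved in the second tree but not in the first. -/
noncomputable def famSetR2U {n : ℕ} (F G : Finset (Finset (Fin n))) :
    Finset (Finset (Fin n)) :=
  (quartets n).filter fun X => famResolvedU G X ∧ ¬ famResolvedU F X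

/-- Quartets unresolved in both trees. -/
noncomputable def famSetUU {n : ℕ} (F G : Finset (Finset (Fin n))) :
    Finset (Finset (Fin n)) :=
  (quartets n).filter fun X => ¬ famResolvedU F X ∧ ¬ famResolvedU G X

/-- The parametric quartet distance, at the level of split systems. -/
noncomputable def famPdistU {n : ℕ} (p : ℝ) (F G : Finset (Finset (Fin n))) : ℝ :=
  ((famSetDU F G).card : ℝ) +
    p * (((famSetR1U F G).card : ℝ) + ((famSetR2U F G).card : ℝ))

namespace UTree

variable {n : ℕ}

/-- The split system of the restriction `T|X`. -/
noncomputable def restrict (T : UTree n) (X : Finset (Fin n)) : Finset (Finset (Fin n)) :=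
  famRestrictU T.splits X

/-- The quartet `X` is resolved in `T`, i.e. `T|X` is fully resolved. -/
def Resolved (T : UTree n) (X : Finset (Fin n)) : Prop :=
  famResolvedU T.splits X

/-- An unrooted phylogeny is fully resolved (all internal nodes have degree exactly
three) iff every quartet is resolved in it. -/
def FullyResolved (T : UTree n) : Prop :=
  ∀ X ∈ quartets n, T.Resolved X

noncomputable def setS (T₁ T₂ : UTree n) : Finset (Finset (Fin n)) :=
  famSetSU T₁.splits T₂.splits

noncomputable def setD (T₁ T₂ : UTree n) : Finset (Finset (Fin n)) :=
  famSetDU T₁.splits T₂.splits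

noncomputable def setR1 (T₁ T₂ : UTree n) : Finset (Finset (Fin n)) :=
  famSetR1U T₁.splits T₂.splits

noncomputable def setR2 (T₁ T₂ : UTree n) : Finset (Finset (Fin n)) :=
  famSetR2U T₁.splits T₂.splits

noncomputable def setU (T₁ T₂ : UTree n) : Finset (Finset (Fin n)) :=
  famSetUU T₁.splits T₂.splits

/-- The parametric quartet distance `d⁽ᵖ⁾(T₁,T₂)`. -/
noncomputable def pdist (p : ℝ) (T₁ T₂ : UTree n) : ℝ :=
  famPdistU p T₁.splits T₂.splits

theorem splits_injective : Function.Injective (splits (n := n)) := by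
  rintro ⟨s₁, _, _, _, _⟩ ⟨s₂, _, _, _, _⟩ h
  simp only [mk.injEq] at h ⊢
  exact h

noncomputable instance : Fintype (UTree n) :=
  Fintype.ofInjective splits splits_injective

end UTree

namespace RTree

variable {n : ℕ}

/-- The children of the node of `T` corresponding to the cluster `C`: the maximal
clusters of `T` properly contained in `C`. -/
noncomputable def childSet (T : RTree n) (C : Finset (Fin n)) : Finset (Finset (Fin n)) :=
  T.clusters.filter fun A => A ⊂ C ∧ ¬ ∃ B ∈ T.clusters, A ⊂ B ∧ B ⊂ C

/-- The cluster family of `Pull-Out(T, u)`, where `u` is the child of the node `v`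
corresponding to the cluster `A ⊂ C`:  the node `v` is split in two, creating the
new cluster `C \ A` gathering the remaining children of `v`. -/
noncomputable def pullOutFam (T : RTree n) (C A : Finset (Fin n)) : Finset (Finset (Fin n)) :=
  insert (C \ A) T.clusters

end RTree

/-- The triplets that are not resolved in the tree with cluster family `F` but are
resolved in the tree with cluster family `F'` (the set `L_q` for `F' = Pull-Out`). -/
noncomputable def famL {n : ℕ} (F F' : Finset (Finset (Fin n))) : Finset (Finset (Fin n)) :=
  (triplets n).filter fun X => ¬ famResolved F X ∧ famResolved F' X

/-- The number `f_q` of votes cast by the profile `P` *for* the way the triplets of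
`famL F F'` are resolved in `F'`. -/
noncomputable def famAgree {n k : ℕ} (P : Fin k → RTree n)
    (F F' : Finset (Finset (Fin n))) : ℕ :=
  ∑ X ∈ famL F F',
    (Finset.univ.filter fun i : Fin k =>
      famRestrict (P i).clusters X = famRestrict F' X).card

/-- The number `a_q` of votes cast by the profile `P` *against* the way the triplets
of `famL F F'` are resolved in `F'`. -/
noncomputable def famDisagree {n k : ℕ} (P : Fin k → RTree n)
    (F F' : Finset (Finset (Fin n))) : ℕ :=
  ∑ X ∈ famL F F',
    (Finset.univ.filter fun i : Fin k =>
      famRestrict (P i).clusters X ≠ famRestrict F' X).card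

namespace UTree

variable {n : ℕ}

/-- `part` is the partition of the taxa into the leaf sets of the subtrees hanging
off an internal node `v` of `T`: its blocks are split sides, they partition the taxon
set, there are at least three of them (`v` is internal), and every split of `T` has,
on one of its two sides, leaves from only one block (its edge lies in one of the
subtrees around `v`). -/
def IsNodePartition (T : UTree n) (part : Finset (Finset (Fin n))) : Prop :=
  3 ≤ part.card ∧ (∀ B ∈ part, B ∈ T.splits) ∧
    (∀ B₁ ∈ part, ∀ B₂ ∈ part, B₁ ≠ B₂ → B₁ ∩ B₂ = ∅) ∧
    (∀ x : Fin n, ∃ B ∈ part, x ∈ B) ∧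
    ∀ A ∈ T.splits, (∃ B ∈ part, A ⊆ B) ∨ (∃ B ∈ part, Finset.univ \ A ⊆ B)

/-- The split system of `Pull-2-Out(T, u₁, u₂)`, where `u₁`, `u₂` are the neighbors
of the node `v` whose subtrees have leaf sets `B₁` and `B₂`:  the node `v` is split
in two, creating the new split `B₁ ∪ B₂` versus the rest. -/
noncomputable def pull2Fam (T : UTree n) (B₁ B₂ : Finset (Fin n)) :
    Finset (Finset (Fin n)) :=
  insert (B₁ ∪ B₂) (insert (Finset.univ \ (B₁ ∪ B₂)) T.splits)

end UTree

/-- The quartets that are not resolved in the tree with split system `F` but are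
resolved in the tree with split system `F'` (the set `L_{qr}` for `F' = Pull-2-Out`). -/
noncomputable def famLU {n : ℕ} (F F' : Finset (Finset (Fin n))) : Finset (Finset (Fin n)) :=
  (quartets n).filter fun X => ¬ famResolvedU F X ∧ famResolvedU F' X

/-- The number `f_{qr}` of votes cast by the profile `P` *for* the way the quartets
of `famLU F F'` are resolved in `F'`. -/
noncomputable def famAgreeU {n k : ℕ} (P : Fin k → UTree n)
    (F F' : Finset (Finset (Fin n))) : ℕ :=
  ∑ X ∈ famLU F F',
    (Finset.univ.filter fun i : Fin k =>
      famRestrictU (P i).splits X = famRestrictU F' X).card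

/-- The number `a_{qr}` of votes cast by the profile `P` *against* the way the
quartets of `famLU F F'` are resolved in `F'`. -/
noncomputable def famDisagreeU {n k : ℕ} (P : Fin k → UTree n)
    (F F' : Finset (Finset (Fin n))) : ℕ :=
  ∑ X ∈ famLU F F',
    (Finset.univ.filter fun i : Fin k =>
      famRestrictU (P i).splits X ≠ famRestrictU F' X).card

/-- The set `M_q(v)` of triplets `X ∈ R₂(T₁,T₂)` such that the least common ancestor
of `X` in `T₁` is the node `v` (with cluster `C`, i.e. `C` is the smallest cluster
of `T₁` containing `X`), `T₁|X` is unresolved, but the restriction of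
`Pull-Out(T₁, A)` to `X` is fully resolved (where `A` is a child of `C`). -/
noncomputable def famM {n : ℕ} (T₁ T₂ : RTree n) (C A : Finset (Fin n)) :
    Finset (Finset (Fin n)) :=
  (triplets n).filter fun X =>
    X ⊆ C ∧ (∀ C' ∈ T₁.clusters, X ⊆ C' → C ⊆ C') ∧
      famResolved T₂.clusters X ∧ ¬ famResolved T₁.clusters X ∧
      famResolved (T₁.pullOutFam C A) X

/-- The set `F_q`: triplets of `M_q(v)` on which `T₂` agrees with `Pull-Out(T₁, A)`. -/
noncomputable def famF {n : ℕ} (T₁ T₂ : RTree n) (C A : Finset (Fin n)) :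
    Finset (Finset (Fin n)) :=
  (famM T₁ T₂ C A).filter fun X =>
    famRestrict T₂.clusters X = famRestrict (T₁.pullOutFam C A) X

/-- The set `A_q`: triplets of `M_q(v)` on which `T₂` disagrees with
`Pull-Out(T₁, A)`. -/
noncomputable def famA {n : ℕ} (T₁ T₂ : RTree n) (C A : Finset (Fin n)) :
    Finset (Finset (Fin n)) :=
  (famM T₁ T₂ C A).filter fun X =>
    famRestrict T₂.clusters X ≠ famRestrict (T₁.pullOutFam C A) X

/-- The set `M_{qr}(v)` of quartets `X ∈ R₂(T₁,T₂)` such that `T₁|X` is a fan whose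
pairwise leaf paths meet at the node `v` (with node partition `part`, i.e. the four
leaves of `X` lie in four distinct blocks of `part`), `T₁|X` is unresolved, but the
restriction of `Pull-2-Out(T₁, B₁, B₂)` to `X` is fully resolved. -/
noncomputable def famMU {n : ℕ} (T₁ T₂ : UTree n)
    (part : Finset (Finset (Fin n))) (B₁ B₂ : Finset (Fin n)) :
    Finset (Finset (Fin n)) :=
  (quartets n).filter fun X =>
    (∀ B ∈ part, (B ∩ X).card ≤ 1) ∧
      famResolvedU T₂.splits X ∧ ¬ famResolvedU T₁.splits X ∧
      famResolvedU (T₁.pull2Fam B₁ B₂) X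

/-- The set `F_{qr}`: quartets of `M_{qr}(v)` on which `T₂` agrees with
`Pull-2-Out(T₁, B₁, B₂)`. -/
noncomputable def famFU {n : ℕ} (T₁ T₂ : UTree n)
    (part : Finset (Finset (Fin n))) (B₁ B₂ : Finset (Fin n)) :
    Finset (Finset (Fin n)) :=
  (famMU T₁ T₂ part B₁ B₂).filter fun X =>
    famRestrictU T₂.splits X = famRestrictU (T₁.pull2Fam B₁ B₂) X

/-- The set `A_{qr}`: quartets of `M_{qr}(v)` on which `T₂` disagrees with
`Pull-2-Out(T₁, B₁, B₂)`. -/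
noncomputable def famAU {n : ℕ} (T₁ T₂ : UTree n)
    (part : Finset (Finset (Fin n))) (B₁ B₂ : Finset (Fin n)) :
    Finset (Finset (Fin n)) :=
  (famMU T₁ T₂ part B₁ B₂).filter fun X =>
    famRestrictU T₂.splits X ≠ famRestrictU (T₁.pull2Fam B₁ B₂) X

namespace BadResAux

open Finset

variable {n : ℕ}

lemma mem_triplets' {X : Finset (Fin n)} : X ∈ triplets n ↔ X.card = 3 := by
  simp [triplets, Finset.mem_powersetCard_univ]

lemma mem_quartets' {X : Finset (Fin n)} : X ∈ quartets n ↔ X.card = 4 := by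
  simp [quartets, Finset.mem_powersetCard_univ]

lemma mem_famRestrict' {F : Finset (Finset (Fin n))} {X A : Finset (Fin n)} :
    A ∈ famRestrict F X ↔ (∃ D ∈ F, D ∩ X = A) ∧ A ≠ ∅ := by
  simp [famRestrict]

lemma mem_famRestrictU' {F : Finset (Finset (Fin n))} {X A : Finset (Fin n)} :
    A ∈ famRestrictU F X ↔ (∃ D ∈ F, D ∩ X = A) ∧ A ≠ ∅ ∧ A ≠ X := by
  simp [famRestrictU]

lemma childSet_mem {T : RTree n} {C A : Finset (Fin n)} (h : A ∈ T.childSet C) :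
    A ∈ T.clusters ∧ A ⊂ C ∧ ¬ ∃ B ∈ T.clusters, A ⊂ B ∧ B ⊂ C := by
  simpa [RTree.childSet] using h

lemma childSet_disj {T : RTree n} {C A A' : Finset (Fin n)}
    (h : A ∈ T.childSet C) (h' : A' ∈ T.childSet C) (hne : A ≠ A') : A ∩ A' = ∅ := by
  obtain ⟨hA, hAC, hAmax⟩ := childSet_mem h
  obtain ⟨hA', hA'C, hA'max⟩ := childSet_mem h'
  rcases T.laminar A hA A' hA' with hsub | hsub | hd
  · exact absurd ⟨A', hA', Finset.ssubset_iff_subset_ne.2 ⟨hsub, hne⟩, hA'C⟩ hAmax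
  · exact absurd ⟨A, hA, Finset.ssubset_iff_subset_ne.2 ⟨hsub, hne.symm⟩, hAC⟩ hA'max
  · exact hd

lemma exists_child (T : RTree n) {C : Finset (Fin n)} {x : Fin n}
    (hx : x ∈ C) (hne : ({x} : Finset (Fin n)) ≠ C) :
    ∃ A ∈ T.childSet C, x ∈ A := by
  classical
  set s := T.clusters.filter (fun B => x ∈ B ∧ B ⊂ C) with hs
  have hxs : ({x} : Finset (Fin n)) ∈ s := by
    simp only [hs, Finset.mem_filter]
    exact ⟨T.singleton_mem x, by simp, Finset.ssubset_iff_subset_ne.2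
      ⟨Finset.singleton_subset_iff.2 hx, hne⟩⟩
  obtain ⟨B, hBs, hBmax⟩ := s.exists_max_image Finset.card ⟨_, hxs⟩
  simp only [hs, Finset.mem_filter] at hBs
  refine ⟨B, ?_, hBs.2.1⟩
  simp only [RTree.childSet, Finset.mem_filter]
  refine ⟨hBs.1, hBs.2.2, ?_⟩
  rintro ⟨B', hB', hBB', hB'C⟩
  have hB's : B' ∈ s := by
    simp only [hs, Finset.mem_filter]
    exact ⟨hB', hBB'.subset hBs.2.1, hB'C⟩
  have := hBmax B' hB's
  have := Finset.card_lt_card hBB'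
  omega

end BadResAux
namespace BadResAux
open Finset
variable {n : ℕ}

lemma mem_famM' {T₁ T₂ : RTree n} {C A X : Finset (Fin n)} :
    X ∈ famM T₁ T₂ C A ↔ X.card = 3 ∧ X ⊆ C ∧
      (∀ C' ∈ T₁.clusters, X ⊆ C' → C ⊆ C') ∧
      famResolved T₂.clusters X ∧ ¬ famResolved T₁.clusters X ∧
      famResolved (T₁.pullOutFam C A) X := by
  rw [famM, Finset.mem_filter, mem_triplets']

lemma pointwise_R (T₁ T₂ : RTree n) (C X : Finset (Fin n)) :
    2 * ((T₁.childSet C).filter (fun A => X ∈ famF T₁ T₂ C A)).card ≤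
      ((T₁.childSet C).filter (fun A => X ∈ famA T₁ T₂ C A)).card := by
  classical
  set cs := T₁.childSet C with hcs
  set SM := cs.filter (fun A => X ∈ famM T₁ T₂ C A) with hSMdef
  have h1 : cs.filter (fun A => X ∈ famF T₁ T₂ C A)
      = SM.filter (fun A =>
        famRestrict T₂.clusters X = famRestrict (T₁.pullOutFam C A) X) := by
    ext A
    simp only [hSMdef, famF, Finset.mem_filter]
    tauto
  have h2 : cs.filter (fun A => X ∈ famA T₁ T₂ C A)
      = SM.filter (fun A =>
        ¬ famRestrict T₂.clusters X = famRestrict (T₁.pullOutFam C A) X) := by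
    ext A
    simp only [hSMdef, famA, Finset.mem_filter]
    tauto
  have hsplit : (cs.filter (fun A => X ∈ famF T₁ T₂ C A)).card
      + (cs.filter (fun A => X ∈ famA T₁ T₂ C A)).card = SM.card := by
    rw [h1, h2, Finset.card_filter_add_card_filter_not]
  rcases (cs.filter (fun A => X ∈ famF T₁ T₂ C A)).eq_empty_or_nonempty with he | ⟨A₀, hA₀⟩
  · simp [he]
  have hA₀cs : A₀ ∈ cs := (Finset.mem_filter.1 hA₀).1
  have hA₀F : X ∈ famF T₁ T₂ C A₀ := (Finset.mem_filter.1 hA₀).2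
  have hA₀M : X ∈ famM T₁ T₂ C A₀ := (Finset.mem_filter.1 hA₀F).1
  obtain ⟨hX3, hXC, hmin, hres2, hnres1, -⟩ := mem_famM'.1 hA₀M
  have hnres1' : ∀ D ∈ T₁.clusters, (D ∩ X).card ≠ 2 := by
    intro D hD h
    exact hnres1 ⟨D, hD, h⟩
  -- any child meeting X meets it in exactly one point
  have inter_eq : ∀ A ∈ cs, ∀ x, x ∈ X → x ∈ A → A ∩ X = {x} := by
    intro A hA x hxX hxA
    have hAcl : A ∈ T₁.clusters := (childSet_mem hA).1
    have hnsub : ¬ X ⊆ A := by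
      intro hsub
      exact (childSet_mem hA).2.1.not_subset (hmin A hAcl hsub)
    have hlt : (A ∩ X).card < 3 := by
      have hne : A ∩ X ≠ X := fun h => hnsub (by rw [← h]; exact Finset.inter_subset_left)
      have := Finset.card_lt_card (Finset.ssubset_iff_subset_ne.2
        ⟨Finset.inter_subset_right, hne⟩)
      omega
    have h2' : (A ∩ X).card ≠ 2 := hnres1' A hAcl
    have h3' : 1 ≤ (A ∩ X).card :=
      Finset.card_pos.2 ⟨x, Finset.mem_inter.2 ⟨hxA, hxX⟩⟩
    obtain ⟨y, hy⟩ := Finset.card_eq_one.1 (by omega : (A ∩ X).card = 1)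
    have hxy : x ∈ ({y} : Finset (Fin n)) := hy ▸ Finset.mem_inter.2 ⟨hxA, hxX⟩
    rw [Finset.mem_singleton] at hxy
    rw [hy, hxy]
  -- membership in SM for a child containing a point of X
  have mem_SM : ∀ A ∈ cs, ∀ x, x ∈ X → x ∈ A → A ∈ SM := by
    intro A hA x hxX hxA
    have hpair : ((C \ A) ∩ X).card = 2 := by
      have hXA : (C \ A) ∩ X = X \ A := by
        ext y
        simp only [Finset.mem_inter, Finset.mem_sdiff]
        exact ⟨fun h => ⟨h.2, h.1.2⟩, fun h => ⟨⟨hXC h.1, h.2⟩, h.1⟩⟩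
      have := Finset.card_inter_add_card_sdiff X A
      have hx1 : (X ∩ A).card = 1 := by
        rw [Finset.inter_comm, inter_eq A hA x hxX hxA]
        simp
      rw [hXA]; omega
    refine Finset.mem_filter.2 ⟨hA, mem_famM'.2 ⟨hX3, hXC, hmin, hres2, hnres1, ?_⟩⟩
    exact ⟨C \ A, Finset.mem_insert_self _ _, hpair⟩
  -- SM has at least three elements
  obtain ⟨x₁, x₂, x₃, h12, h13, h23, hXeq⟩ := Finset.card_eq_three.1 hX3
  have hx₁X : x₁ ∈ X := by rw [hXeq]; simp
  have hx₂X : x₂ ∈ X := by rw [hXeq]; simp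
  have hx₃X : x₃ ∈ X := by rw [hXeq]; simp
  have hsingne : ∀ x, x ∈ X → ({x} : Finset (Fin n)) ≠ C := by
    intro x hxX h
    have h1 : x₁ ∈ ({x} : Finset (Fin n)) := h ▸ hXC hx₁X
    have h2 : x₂ ∈ ({x} : Finset (Fin n)) := h ▸ hXC hx₂X
    rw [Finset.mem_singleton] at h1 h2
    exact h12 (h1.trans h2.symm)
  obtain ⟨A₁, hA₁, hxA₁⟩ := exists_child T₁ (hXC hx₁X) (hsingne x₁ hx₁X)
  obtain ⟨A₂, hA₂, hxA₂⟩ := exists_child T₁ (hXC hx₂X) (hsingne x₂ hx₂X)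
  obtain ⟨A₃, hA₃, hxA₃⟩ := exists_child T₁ (hXC hx₃X) (hsingne x₃ hx₃X)
  have hdist : ∀ {A B : Finset (Fin n)}, A ∈ cs → B ∈ cs → ∀ x y, x ∈ X → y ∈ X →
      x ∈ A → y ∈ B → x ≠ y → A ≠ B := by
    intro A B hA hB x y hxX hyX hxA hyB hxy h
    subst h
    have e1 := inter_eq A hA x hxX hxA
    have e2 := inter_eq A hA y hyX hyB
    rw [e1] at e2
    exact hxy (Finset.singleton_injective e2)
  have hA12 : A₁ ≠ A₂ := hdist hA₁ hA₂ x₁ x₂ hx₁X hx₂X hxA₁ hxA₂ h12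
  have hA13 : A₁ ≠ A₃ := hdist hA₁ hA₃ x₁ x₃ hx₁X hx₃X hxA₁ hxA₃ h13
  have hA23 : A₂ ≠ A₃ := hdist hA₂ hA₃ x₂ x₃ hx₂X hx₃X hxA₂ hxA₃ h23
  have hsub3 : ({A₁, A₂, A₃} : Finset (Finset (Fin n))) ⊆ SM := by
    intro A hA
    simp only [Finset.mem_insert, Finset.mem_singleton] at hA
    rcases hA with rfl | rfl | rfl
    · exact mem_SM _ hA₁ x₁ hx₁X hxA₁
    · exact mem_SM _ hA₂ x₂ hx₂X hxA₂
    · exact mem_SM _ hA₃ x₃ hx₃X hxA₃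
  have hcard3 : ({A₁, A₂, A₃} : Finset (Finset (Fin n))).card = 3 := by
    rw [Finset.card_insert_of_notMem (by simp [hA12, hA13]),
      Finset.card_insert_of_notMem (by simp [hA23]), Finset.card_singleton]
  have hSM3 : 3 ≤ SM.card := hcard3 ▸ Finset.card_le_card hsub3
  -- SF has at most one element
  have hSF1 : (cs.filter (fun A => X ∈ famF T₁ T₂ C A)).card ≤ 1 := by
    rw [Finset.card_le_one]
    intro A hA B hB
    by_contra hne
    have hAF : X ∈ famF T₁ T₂ C A := (Finset.mem_filter.1 hA).2
    have hBF : X ∈ famF T₁ T₂ C B := (Finset.mem_filter.1 hB).2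
    have hAcs : A ∈ cs := (Finset.mem_filter.1 hA).1
    have hBcs : B ∈ cs := (Finset.mem_filter.1 hB).1
    have hAeq : famRestrict T₂.clusters X = famRestrict (T₁.pullOutFam C A) X :=
      (Finset.mem_filter.1 hAF).2
    have hBeq : famRestrict T₂.clusters X = famRestrict (T₁.pullOutFam C B) X :=
      (Finset.mem_filter.1 hBF).2
    -- the pull-out pair for A
    have hresA : famResolved (T₁.pullOutFam C A) X :=
      (mem_famM'.1 (Finset.mem_filter.1 hAF).1).2.2.2.2.2
    obtain ⟨D, hD, hD2⟩ := hresA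
    rcases Finset.mem_insert.1 hD with rfl | hDcl
    swap
    · exact hnres1' D hDcl hD2
    -- (C \ A) ∩ X has card 2 and lies in both restrictions
    have hmem : (C \ A) ∩ X ∈ famRestrict (T₁.pullOutFam C A) X :=
      mem_famRestrict'.2 ⟨⟨C \ A, Finset.mem_insert_self _ _, rfl⟩,
        by intro h; rw [h] at hD2; simp at hD2⟩
    rw [← hAeq, hBeq] at hmem
    obtain ⟨⟨D', hD', hD'eq⟩, -⟩ := mem_famRestrict'.1 hmem
    rcases Finset.mem_insert.1 hD' with rfl | hD'cl
    swap
    · exact hnres1' D' hD'cl (by rw [hD'eq]; exact hD2)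
    -- so (C\B) ∩ X = (C\A) ∩ X, i.e. X \ B = X \ A
    have hXA : (C \ A) ∩ X = X \ A := by
      ext y
      simp only [Finset.mem_inter, Finset.mem_sdiff]
      exact ⟨fun h => ⟨h.2, h.1.2⟩, fun h => ⟨⟨hXC h.1, h.2⟩, h.1⟩⟩
    have hXB : (C \ B) ∩ X = X \ B := by
      ext y
      simp only [Finset.mem_inter, Finset.mem_sdiff]
      exact ⟨fun h => ⟨h.2, h.1.2⟩, fun h => ⟨⟨hXC h.1, h.2⟩, h.1⟩⟩
    have hsd : X \ B = X \ A := by rw [← hXA, ← hXB, hD'eq]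
    have hint : X ∩ A = X ∩ B := by
      rw [← Finset.sdiff_sdiff_self_left X A, ← Finset.sdiff_sdiff_self_left X B, hsd]
    -- X ∩ A is nonempty (card of X \ A is 2)
    have hXA2 : (X \ A).card = 2 := by rw [← hXA]; exact hD2
    have : (X ∩ A).card = 1 := by
      have := Finset.card_inter_add_card_sdiff X A
      omega
    obtain ⟨x, hx⟩ := Finset.card_eq_one.1 this
    have hxA : x ∈ X ∩ A := hx ▸ Finset.mem_singleton_self x
    have hxB : x ∈ X ∩ B := by rw [← hint]; exact hxA
    have hdisj := childSet_disj hAcs hBcs hne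
    have : x ∈ A ∩ B := Finset.mem_inter.2
      ⟨(Finset.mem_inter.1 hxA).2, (Finset.mem_inter.1 hxB).2⟩
    rw [hdisj] at this
    simp at this
  omega

end BadResAux
namespace BadResAux
open Finset
variable {n : ℕ}

lemma famF_subset {T₁ T₂ : RTree n} {C A : Finset (Fin n)} :
    famF T₁ T₂ C A ⊆ triplets n :=
  (Finset.filter_subset _ _).trans (Finset.filter_subset _ _)

lemma famA_subset {T₁ T₂ : RTree n} {C A : Finset (Fin n)} :
    famA T₁ T₂ C A ⊆ triplets n :=
  (Finset.filter_subset _ _).trans (Finset.filter_subset _ _)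

lemma sum_card_swap {α β : Type*} [DecidableEq α] [DecidableEq β]
    (s : Finset α) (t : Finset β) (g : α → Finset β) (h : ∀ a ∈ s, g a ⊆ t) :
    ∑ a ∈ s, (g a).card = ∑ b ∈ t, (s.filter (fun a => b ∈ g a)).card := by
  classical
  have : ∀ a ∈ s, (g a).card = ∑ b ∈ t, if b ∈ g a then 1 else 0 := by
    intro a ha
    rw [← Finset.card_filter]
    congr 1
    rw [Finset.filter_mem_eq_inter, Finset.inter_eq_right.2 (h a ha)]
  rw [Finset.sum_congr rfl this, Finset.sum_comm]
  refine Finset.sum_congr rfl fun b _ => ?_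
  rw [Finset.card_filter]

lemma rooted_half (T₁ T₂ : RTree n) (C : Finset (Fin n))
    (h3 : 3 ≤ (T₁.childSet C).card) :
    ∃ A ∈ T₁.childSet C, 2 * (famF T₁ T₂ C A).card ≤ (famA T₁ T₂ C A).card := by
  classical
  by_contra hcon
  push_neg at hcon
  have hne : (T₁.childSet C).Nonempty := Finset.card_pos.1 (by omega)
  have hlt : ∑ A ∈ T₁.childSet C, (famA T₁ T₂ C A).card
      < ∑ A ∈ T₁.childSet C, 2 * (famF T₁ T₂ C A).card :=
    Finset.sum_lt_sum_of_nonempty hne fun A hA => hcon A hA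
  have hge : ∑ A ∈ T₁.childSet C, 2 * (famF T₁ T₂ C A).card
      ≤ ∑ A ∈ T₁.childSet C, (famA T₁ T₂ C A).card := by
    rw [← Finset.mul_sum,
      sum_card_swap (T₁.childSet C) (triplets n) _ (fun A _ => famF_subset),
      sum_card_swap (T₁.childSet C) (triplets n) _ (fun A _ => famA_subset),
      Finset.mul_sum]
    exact Finset.sum_le_sum fun X _ => pointwise_R T₁ T₂ C X
  omega

end BadResAux
namespace BadResAux
open Finset
variable {n : ℕ}

lemma mem_famMU' {T₁ T₂ : UTree n} {part : Finset (Finset (Fin n))}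
    {B₁ B₂ X : Finset (Fin n)} :
    X ∈ famMU T₁ T₂ part B₁ B₂ ↔ X.card = 4 ∧
      (∀ B ∈ part, (B ∩ X).card ≤ 1) ∧
      famResolvedU T₂.splits X ∧ ¬ famResolvedU T₁.splits X ∧
      famResolvedU (T₁.pull2Fam B₁ B₂) X := by
  rw [famMU, Finset.mem_filter, mem_quartets']

lemma pointwise_U (T₁ T₂ : UTree n) (part : Finset (Finset (Fin n)))
    (hpart : T₁.IsNodePartition part) (X : Finset (Fin n)) :
    2 * (((part ×ˢ part).filter (fun p => p.1 ≠ p.2)).filter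
        (fun p => X ∈ famFU T₁ T₂ part p.1 p.2)).card ≤
      (((part ×ˢ part).filter (fun p => p.1 ≠ p.2)).filter
        (fun p => X ∈ famAU T₁ T₂ part p.1 p.2)).card := by
  classical
  obtain ⟨-, hsplits, hdisj, hcov, -⟩ := hpart
  choose f hf1 hf2 using hcov
  set PP := (part ×ˢ part).filter (fun p => p.1 ≠ p.2) with hPP
  set SM := PP.filter (fun p => X ∈ famMU T₁ T₂ part p.1 p.2) with hSMdef
  have h1 : PP.filter (fun p => X ∈ famFU T₁ T₂ part p.1 p.2)
      = SM.filter (fun p =>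
        famRestrictU T₂.splits X = famRestrictU (T₁.pull2Fam p.1 p.2) X) := by
    ext p
    simp only [hSMdef, famFU, Finset.mem_filter]
    tauto
  have h2 : PP.filter (fun p => X ∈ famAU T₁ T₂ part p.1 p.2)
      = SM.filter (fun p =>
        ¬ famRestrictU T₂.splits X = famRestrictU (T₁.pull2Fam p.1 p.2) X) := by
    ext p
    simp only [hSMdef, famAU, Finset.mem_filter]
    tauto
  have hsplit : (PP.filter (fun p => X ∈ famFU T₁ T₂ part p.1 p.2)).card
      + (PP.filter (fun p => X ∈ famAU T₁ T₂ part p.1 p.2)).card = SM.card := by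
    rw [h1, h2, Finset.card_filter_add_card_filter_not]
  rcases (PP.filter (fun p => X ∈ famFU T₁ T₂ part p.1 p.2)).eq_empty_or_nonempty
    with he | ⟨p₀, hp₀⟩
  · simp [he]
  have hp₀PP : p₀ ∈ PP := (Finset.mem_filter.1 hp₀).1
  have hp₀F : X ∈ famFU T₁ T₂ part p₀.1 p₀.2 := (Finset.mem_filter.1 hp₀).2
  have hp₀M : X ∈ famMU T₁ T₂ part p₀.1 p₀.2 := (Finset.mem_filter.1 hp₀F).1
  have hp₀eq : famRestrictU T₂.splits X = famRestrictU (T₁.pull2Fam p₀.1 p₀.2) X :=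
    (Finset.mem_filter.1 hp₀F).2
  obtain ⟨hX4, hblocks, hres2, hnres1, hrespull₀⟩ := mem_famMU'.1 hp₀M
  have hp₀1 : p₀.1 ∈ part := by
    have := (Finset.mem_filter.1 hp₀PP).1; exact (Finset.mem_product.1 this).1
  have hp₀2 : p₀.2 ∈ part := by
    have := (Finset.mem_filter.1 hp₀PP).1; exact (Finset.mem_product.1 this).2
  have hp₀ne : p₀.1 ≠ p₀.2 := (Finset.mem_filter.1 hp₀PP).2
  have hnres1' : ∀ D ∈ T₁.splits, (D ∩ X).card ≠ 2 := fun D hD h => hnres1 ⟨D, hD, h⟩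
  -- blocks meet X in at most one point; f x is the unique block containing x
  have blk_inter : ∀ B ∈ part, ∀ x, x ∈ X → x ∈ B → B ∩ X = {x} := by
    intro B hB x hxX hxB
    have h1' : 1 ≤ (B ∩ X).card :=
      Finset.card_pos.2 ⟨x, Finset.mem_inter.2 ⟨hxB, hxX⟩⟩
    obtain ⟨y, hy⟩ := Finset.card_eq_one.1 (le_antisymm (hblocks B hB) h1')
    have hxy : x ∈ ({y} : Finset (Fin n)) := hy ▸ Finset.mem_inter.2 ⟨hxB, hxX⟩
    rw [Finset.mem_singleton] at hxy
    rw [hy, hxy]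
  have block_eq : ∀ B ∈ part, ∀ x, x ∈ B → B = f x := by
    intro B hB x hxB
    by_contra h
    have := hdisj B hB (f x) (hf1 x) h
    have : x ∈ B ∩ f x := Finset.mem_inter.2 ⟨hxB, hf2 x⟩
    rw [hdisj B hB (f x) (hf1 x) h] at this
    simp at this
  -- the pull-out pair always has card 2 on membership in SM-like conditions
  have pair_card : ∀ B₁ B₂ : Finset (Fin n),
      famResolvedU (T₁.pull2Fam B₁ B₂) X → ((B₁ ∪ B₂) ∩ X).card = 2 := by
    intro B₁ B₂ hres
    obtain ⟨D, hD, hD2⟩ := hres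
    rcases Finset.mem_insert.1 hD with rfl | hD'
    · exact hD2
    rcases Finset.mem_insert.1 hD' with rfl | hDcl
    · have hco : (Finset.univ \ (B₁ ∪ B₂)) ∩ X = X \ (B₁ ∪ B₂) := by
        ext y
        simp only [Finset.mem_inter, Finset.mem_sdiff, Finset.mem_univ, true_and]
        tauto
      rw [hco] at hD2
      have := Finset.card_inter_add_card_sdiff X (B₁ ∪ B₂)
      rw [Finset.inter_comm]
      omega
    · exact absurd hD2 (hnres1' D hDcl)
  -- extract the two singleton blocks from a pair in SM
  have pair_split : ∀ B₁ ∈ part, ∀ B₂ ∈ part, B₁ ≠ B₂ →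
      ((B₁ ∪ B₂) ∩ X).card = 2 →
      ∃ x ∈ X, ∃ y ∈ X, x ≠ y ∧ x ∈ B₁ ∧ y ∈ B₂ ∧ (B₁ ∪ B₂) ∩ X = {x, y} := by
    intro B₁ hB₁ B₂ hB₂ hne hc
    have hu : (B₁ ∪ B₂) ∩ X = (B₁ ∩ X) ∪ (B₂ ∩ X) := Finset.union_inter_distrib_right _ _ _
    have hle := Finset.card_union_le (B₁ ∩ X) (B₂ ∩ X)
    have hb1 := hblocks B₁ hB₁
    have hb2 := hblocks B₂ hB₂
    rw [hu] at hc
    have hc1 : (B₁ ∩ X).card = 1 := by omega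
    have hc2 : (B₂ ∩ X).card = 1 := by omega
    obtain ⟨x, hx⟩ := Finset.card_eq_one.1 hc1
    obtain ⟨y, hy⟩ := Finset.card_eq_one.1 hc2
    have hxB : x ∈ B₁ ∩ X := hx ▸ Finset.mem_singleton_self x
    have hyB : y ∈ B₂ ∩ X := hy ▸ Finset.mem_singleton_self y
    have hxy : x ≠ y := by
      intro h
      subst h
      have : x ∈ B₁ ∩ B₂ := Finset.mem_inter.2
        ⟨(Finset.mem_inter.1 hxB).1, (Finset.mem_inter.1 hyB).1⟩
      rw [hdisj B₁ hB₁ B₂ hB₂ hne] at this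
      simp at this
    refine ⟨x, (Finset.mem_inter.1 hxB).2, y, (Finset.mem_inter.1 hyB).2, hxy,
      (Finset.mem_inter.1 hxB).1, (Finset.mem_inter.1 hyB).1, ?_⟩
    rw [hu, hx, hy]
    ext z
    simp [Finset.mem_insert]
  -- membership in SM
  have mem_SM : ∀ B₁ ∈ part, ∀ B₂ ∈ part, B₁ ≠ B₂ → ∀ x ∈ X, ∀ y ∈ X,
      x ∈ B₁ → y ∈ B₂ → (B₁, B₂) ∈ SM := by
    intro B₁ hB₁ B₂ hB₂ hne x hxX y hyX hxB hyB
    have hxy : x ≠ y := by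
      intro h
      subst h
      have : x ∈ B₁ ∩ B₂ := Finset.mem_inter.2 ⟨hxB, hyB⟩
      rw [hdisj B₁ hB₁ B₂ hB₂ hne] at this
      simp at this
    have hpair : ((B₁ ∪ B₂) ∩ X).card = 2 := by
      have hu : (B₁ ∪ B₂) ∩ X = (B₁ ∩ X) ∪ (B₂ ∩ X) := Finset.union_inter_distrib_right _ _ _
      rw [hu, blk_inter B₁ hB₁ x hxX hxB, blk_inter B₂ hB₂ y hyX hyB]
      have hxyset : ({x} ∪ {y} : Finset (Fin n)) = {x, y} := by ext z; simp
      rw [hxyset, Finset.card_pair hxy]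
    refine Finset.mem_filter.2 ⟨?_, mem_famMU'.2 ⟨hX4, hblocks, hres2, hnres1, ?_⟩⟩
    · exact Finset.mem_filter.2 ⟨Finset.mem_product.2 ⟨hB₁, hB₂⟩, hne⟩
    · exact ⟨B₁ ∪ B₂, Finset.mem_insert_self _ _, hpair⟩
  -- SM has at least 12 elements
  have hSM12 : 12 ≤ SM.card := by
    have himg : X.offDiag.image (fun q => (f q.1, f q.2)) ⊆ SM := by
      intro p hp
      obtain ⟨q, hq, hq'⟩ := Finset.mem_image.1 hp
      obtain ⟨hq1, hq2, hq12⟩ := Finset.mem_offDiag.1 hq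
      have hfne : f q.1 ≠ f q.2 := by
        intro h
        have h1' := blk_inter (f q.1) (hf1 q.1) q.1 hq1 (hf2 q.1)
        have h2' := blk_inter (f q.2) (hf1 q.2) q.2 hq2 (hf2 q.2)
        rw [h] at h1'
        rw [h1'] at h2'
        exact hq12 (Finset.singleton_injective h2')
      rw [← hq']
      exact mem_SM (f q.1) (hf1 q.1) (f q.2) (hf1 q.2) hfne q.1 hq1 q.2 hq2
        (hf2 q.1) (hf2 q.2)
    have hinj : Set.InjOn (fun q : Fin n × Fin n => (f q.1, f q.2)) X.offDiag := by
      intro q hq q' hq' heq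
      obtain ⟨hq1, hq2, -⟩ := Finset.mem_offDiag.1 (Finset.mem_coe.1 hq)
      obtain ⟨hq'1, hq'2, -⟩ := Finset.mem_offDiag.1 (Finset.mem_coe.1 hq')
      have e1 : f q.1 = f q'.1 := congrArg Prod.fst heq
      have e2 : f q.2 = f q'.2 := congrArg Prod.snd heq
      have u1 : q.1 = q'.1 := by
        have a1 := blk_inter (f q.1) (hf1 q.1) q.1 hq1 (hf2 q.1)
        have a2 := blk_inter (f q'.1) (hf1 q'.1) q'.1 hq'1 (hf2 q'.1)
        rw [e1, a2] at a1
        exact (Finset.singleton_injective a1).symm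
      have u2 : q.2 = q'.2 := by
        have a1 := blk_inter (f q.2) (hf1 q.2) q.2 hq2 (hf2 q.2)
        have a2 := blk_inter (f q'.2) (hf1 q'.2) q'.2 hq'2 (hf2 q'.2)
        rw [e2, a2] at a1
        exact (Finset.singleton_injective a1).symm
      exact Prod.ext u1 u2
    have hcard : (X.offDiag.image (fun q => (f q.1, f q.2))).card = 12 := by
      rw [Finset.card_image_of_injOn hinj, Finset.offDiag_card, hX4]
    have := Finset.card_le_card himg
    omega
  -- the four elements of X and their blocks, via p₀
  have hpc₀ := pair_card p₀.1 p₀.2 hrespull₀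
  obtain ⟨a, haX, b, hbX, hab, haB, hbB, hP₀⟩ :=
    pair_split p₀.1 hp₀1 p₀.2 hp₀2 hp₀ne hpc₀
  have hPsub : ({a, b} : Finset (Fin n)) ⊆ X := by
    intro z hz
    rcases Finset.mem_insert.1 hz with rfl | hz
    · exact haX
    · rw [Finset.mem_singleton.1 hz]; exact hbX
  have hXsd : (X \ {a, b}).card = 2 := by
    rw [Finset.card_sdiff_of_subset hPsub, Finset.card_pair hab, hX4]
  obtain ⟨c, d, hcd, hcdeq⟩ := Finset.card_eq_two.1 hXsd
  set T4 : Finset (Finset (Fin n) × Finset (Fin n)) :=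
    {(f a, f b), (f b, f a), (f c, f d), (f d, f c)} with hT4
  have hSFsub : PP.filter (fun p => X ∈ famFU T₁ T₂ part p.1 p.2) ⊆ T4 := by
    intro p hp
    have hpPP : p ∈ PP := (Finset.mem_filter.1 hp).1
    have hpF : X ∈ famFU T₁ T₂ part p.1 p.2 := (Finset.mem_filter.1 hp).2
    have hpM : X ∈ famMU T₁ T₂ part p.1 p.2 := (Finset.mem_filter.1 hpF).1
    have hpeq : famRestrictU T₂.splits X = famRestrictU (T₁.pull2Fam p.1 p.2) X :=
      (Finset.mem_filter.1 hpF).2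
    have hp1 : p.1 ∈ part := (Finset.mem_product.1 (Finset.mem_filter.1 hpPP).1).1
    have hp2 : p.2 ∈ part := (Finset.mem_product.1 (Finset.mem_filter.1 hpPP).1).2
    have hpne : p.1 ≠ p.2 := (Finset.mem_filter.1 hpPP).2
    have hrespull : famResolvedU (T₁.pull2Fam p.1 p.2) X := (mem_famMU'.1 hpM).2.2.2.2
    have hc2 := pair_card p.1 p.2 hrespull
    obtain ⟨x, hxX, y, hyX, hxy, hxB, hyB, hPp⟩ :=
      pair_split p.1 hp1 p.2 hp2 hpne hc2
    have hmem : (p.1 ∪ p.2) ∩ X ∈ famRestrictU (T₁.pull2Fam p.1 p.2) X := by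
      refine mem_famRestrictU'.2 ⟨⟨p.1 ∪ p.2, Finset.mem_insert_self _ _, rfl⟩, ?_, ?_⟩
      · intro h; rw [h] at hc2; simp at hc2
      · intro h; rw [h, hX4] at hc2; omega
    rw [← hpeq, hp₀eq] at hmem
    obtain ⟨⟨D, hD, hDeq⟩, -, -⟩ := mem_famRestrictU'.1 hmem
    have hPor : (p.1 ∪ p.2) ∩ X = {a, b} ∨ (p.1 ∪ p.2) ∩ X = X \ {a, b} := by
      rcases Finset.mem_insert.1 hD with rfl | hD'
      · left; rw [← hDeq]; exact hP₀
      rcases Finset.mem_insert.1 hD' with rfl | hDcl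
      · right
        rw [← hDeq, ← hP₀]
        ext z
        simp only [Finset.mem_inter, Finset.mem_sdiff, Finset.mem_univ, true_and]
        tauto
      · exact absurd (hDeq ▸ hc2 : (D ∩ X).card = 2) (hnres1' D hDcl)
    have hfp1 : p.1 = f x := block_eq p.1 hp1 x hxB
    have hfp2 : p.2 = f y := block_eq p.2 hp2 y hyB
    have hpeq' : p = (f x, f y) := Prod.ext_iff.2 ⟨hfp1, hfp2⟩
    rw [hpeq', hT4]
    simp only [Finset.mem_insert, Finset.mem_singleton, Prod.mk.injEq]
    rcases hPor with hcase | hcase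
    · have hxy2 : ({x, y} : Finset (Fin n)) = {a, b} := by rw [← hPp, hcase]
      have hxm : x = a ∨ x = b := by
        have : x ∈ ({a, b} : Finset (Fin n)) := by
          rw [← hxy2]; simp
        simpa using this
      have hym : y = a ∨ y = b := by
        have : y ∈ ({a, b} : Finset (Fin n)) := by
          rw [← hxy2]; simp
        simpa using this
      rcases hxm with rfl | rfl
      · rcases hym with rfl | rfl
        · exact absurd rfl hxy
        · exact Or.inl ⟨rfl, rfl⟩
      · rcases hym with rfl | rfl
        · exact Or.inr (Or.inl ⟨rfl, rfl⟩)
        · exact absurd rfl hxy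
    · have hxy2 : ({x, y} : Finset (Fin n)) = {c, d} := by rw [← hPp, hcase, hcdeq]
      have hxm : x = c ∨ x = d := by
        have : x ∈ ({c, d} : Finset (Fin n)) := by
          rw [← hxy2]; simp
        simpa using this
      have hym : y = c ∨ y = d := by
        have : y ∈ ({c, d} : Finset (Fin n)) := by
          rw [← hxy2]; simp
        simpa using this
      rcases hxm with rfl | rfl
      · rcases hym with rfl | rfl
        · exact absurd rfl hxy
        · exact Or.inr (Or.inr (Or.inl ⟨rfl, rfl⟩))
      · rcases hym with rfl | rfl
        · exact Or.inr (Or.inr (Or.inr ⟨rfl, rfl⟩))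
        · exact absurd rfl hxy
  have hT4card : T4.card ≤ 4 := by
    refine le_trans (Finset.card_insert_le _ _) (Nat.succ_le_succ ?_)
    refine le_trans (Finset.card_insert_le _ _) (Nat.succ_le_succ ?_)
    refine le_trans (Finset.card_insert_le _ _) (Nat.succ_le_succ ?_)
    exact le_of_eq (Finset.card_singleton _)
  have hSF4 : (PP.filter (fun p => X ∈ famFU T₁ T₂ part p.1 p.2)).card ≤ 4 :=
    le_trans (Finset.card_le_card hSFsub) hT4card
  omega

end BadResAux
namespace BadResAux
open Finset
variable {n : ℕ}

lemma famFU_subset {T₁ T₂ : UTree n} {part : Finset (Finset (Fin n))}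
    {B₁ B₂ : Finset (Fin n)} : famFU T₁ T₂ part B₁ B₂ ⊆ quartets n :=
  (Finset.filter_subset _ _).trans (Finset.filter_subset _ _)

lemma famAU_subset {T₁ T₂ : UTree n} {part : Finset (Finset (Fin n))}
    {B₁ B₂ : Finset (Fin n)} : famAU T₁ T₂ part B₁ B₂ ⊆ quartets n :=
  (Finset.filter_subset _ _).trans (Finset.filter_subset _ _)

lemma unrooted_half (T₁ T₂ : UTree n) (part : Finset (Finset (Fin n)))
    (hpart : T₁.IsNodePartition part) (h4 : 4 ≤ part.card) :
    ∃ B₁ ∈ part, ∃ B₂ ∈ part, B₁ ≠ B₂ ∧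
      2 * (famFU T₁ T₂ part B₁ B₂).card ≤ (famAU T₁ T₂ part B₁ B₂).card := by
  classical
  by_contra hcon
  push_neg at hcon
  set PP := (part ×ˢ part).filter (fun p => p.1 ≠ p.2) with hPP
  have hne : PP.Nonempty := by
    obtain ⟨B₁, hB₁, B₂, hB₂, h⟩ := Finset.one_lt_card.1 (by omega : 1 < part.card)
    exact ⟨(B₁, B₂), Finset.mem_filter.2 ⟨Finset.mem_product.2 ⟨hB₁, hB₂⟩, h⟩⟩
  have hlt : ∑ p ∈ PP, (famAU T₁ T₂ part p.1 p.2).card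
      < ∑ p ∈ PP, 2 * (famFU T₁ T₂ part p.1 p.2).card := by
    refine Finset.sum_lt_sum_of_nonempty hne fun p hp => ?_
    have hp1 := (Finset.mem_product.1 (Finset.mem_filter.1 hp).1).1
    have hp2 := (Finset.mem_product.1 (Finset.mem_filter.1 hp).1).2
    exact hcon p.1 hp1 p.2 hp2 (Finset.mem_filter.1 hp).2
  have hge : ∑ p ∈ PP, 2 * (famFU T₁ T₂ part p.1 p.2).card
      ≤ ∑ p ∈ PP, (famAU T₁ T₂ part p.1 p.2).card := by
    rw [← Finset.mul_sum,
      sum_card_swap PP (quartets n) _ (fun p _ => famFU_subset),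
      sum_card_swap PP (quartets n) _ (fun p _ => famAU_subset),
      Finset.mul_sum]
    exact Finset.sum_le_sum fun X _ => pointwise_U T₁ T₂ part hpart X
  omega

end BadResAux

/-- **Lemma.**  Rooted case: for any two rooted phylogenies `T₁, T₂` and any
unresolved node of `T₁` (a cluster `C` with at least `3` children), there is a
child `A` of `C` such that `|A_q| ≥ 2·|F_q|`.  Unrooted case: for any two unrooted
phylogenies `T₁, T₂` and any unresolved node of `T₁` (a node partition with at
least `4` blocks), there are two distinct blocks `B₁ ≠ B₂` with
`|A_{qr}| ≥ 2·|F_{qr}|`. -/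
theorem exists_bad_resolution (n : ℕ) :
    (∀ T₁ T₂ : RTree n, ∀ C ∈ T₁.clusters, 3 ≤ (T₁.childSet C).card →
      ∃ A ∈ T₁.childSet C, 2 * (famF T₁ T₂ C A).card ≤ (famA T₁ T₂ C A).card) ∧
    ∀ T₁ T₂ : UTree n, ∀ part : Finset (Finset (Fin n)),
      T₁.IsNodePartition part → 4 ≤ part.card →
        ∃ B₁ ∈ part, ∃ B₂ ∈ part, B₁ ≠ B₂ ∧
          2 * (famFU T₁ T₂ part B₁ B₂).card ≤ (famAU T₁ T₂ part B₁ B₂).card := by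
  constructor
  · intro T₁ T₂ C _ h3
    exact BadResAux.rooted_half T₁ T₂ C h3
  · intro T₁ T₂ part hpart h4
    exact BadResAux.unrooted_half T₁ T₂ part hpart h4
end

section
/- For two rooted phylogenies T1 and T2 over the same taxon set, |S(T1,T2)| = Σ s(u,v), where the sum ranges over all internal non-root nodes u of T1 and all internal non-root nodes v of T2. -/
open Finset

attribute [local instance] Classical.propDecidable

/-- `A` is a child of the node of `T` corresponding to the cluster `C`: it is a
maximal cluster of `T` properly contained in `C`. -/
def RTree.IsChild {n : ℕ} (T : RTree n) (A C : Finset (Fin n)) : Prop :=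
  A ∈ T.clusters ∧ C ∈ T.clusters ∧ A ⊂ C ∧ ¬ ∃ B ∈ T.clusters, A ⊂ B ∧ B ⊂ C

/-- The triplet tree `xy|z` is strictly induced by the edge `{v, pa(v)}` of `T`,
where `v` is the node corresponding to the (non-root) cluster `C`: the leaves `x`
and `y` descend from `v` while `z` does not, and moreover `x` and `y` descend from
two distinct children of `v`. -/
def RTree.StrictlyInduces {n : ℕ} (T : RTree n) (C : Finset (Fin n))
    (x y z : Fin n) : Prop :=
  C ∈ T.clusters ∧ C ≠ Finset.univ ∧ x ∈ C ∧ y ∈ C ∧ z ∉ C ∧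
    ∃ A B : Finset (Fin n),
      T.IsChild A C ∧ T.IsChild B C ∧ A ≠ B ∧ x ∈ A ∧ y ∈ B

/-- `s(u,v)`: the number of triplet trees simultaneously strictly induced by the
edge `{u, pa(u)}` of `T₁` (where `u` is the node with cluster `C`) and by the edge
`{v, pa(v)}` of `T₂` (where `v` is the node with cluster `D`). -/
noncomputable def sCount {n : ℕ} (T₁ T₂ : RTree n) (C D : Finset (Fin n)) : ℕ :=
  ((triplets n).filter fun X =>
    ∃ x y z : Fin n, X = {x, y, z} ∧
      T₁.StrictlyInduces C x y z ∧ T₂.StrictlyInduces D x y z).card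

section Helpers

variable {n : ℕ} (T : RTree n)

lemma RTree.nonempty_of_mem {C : Finset (Fin n)} (h : C ∈ T.clusters) : C.Nonempty := by
  rcases C.eq_empty_or_nonempty with rfl | h'
  · exact absurd h T.empty_not_mem
  · exact h'

lemma RTree.comparable {C D : Finset (Fin n)} (hC : C ∈ T.clusters) (hD : D ∈ T.clusters)
    {a : Fin n} (haC : a ∈ C) (haD : a ∈ D) : C ⊆ D ∨ D ⊆ C := by
  rcases T.laminar C hC D hD with h | h | h
  · exact Or.inl h
  · exact Or.inr h
  · exact absurd (Finset.mem_inter.mpr ⟨haC, haD⟩) (by simp [h])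

lemma RTree.exists_lca (x y : Fin n) :
    ∃ M ∈ T.clusters, x ∈ M ∧ y ∈ M ∧ ∀ C ∈ T.clusters, x ∈ C → y ∈ C → M ⊆ C := by
  classical
  set s := T.clusters.filter (fun C => x ∈ C ∧ y ∈ C) with hs
  have hne : s.Nonempty := ⟨Finset.univ, by simp [hs, T.univ_mem]⟩
  obtain ⟨M, hM, hmin⟩ := s.exists_min_image Finset.card hne
  simp only [hs, Finset.mem_filter] at hM
  refine ⟨M, hM.1, hM.2.1, hM.2.2, ?_⟩
  intro C hC hxC hyC
  have hCs : C ∈ s := by simp [hs, hC, hxC, hyC]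
  rcases T.comparable hM.1 hC hM.2.1 hxC with h | h
  · exact h
  · have hle := hmin C hCs
    have hCM : C = M := Finset.eq_of_subset_of_card_le h hle
    rw [hCM]

lemma RTree.exists_child {A C : Finset (Fin n)} (hA : A ∈ T.clusters) (hC : C ∈ T.clusters)
    (h : A ⊂ C) : ∃ B, T.IsChild B C ∧ A ⊆ B := by
  classical
  set s := T.clusters.filter (fun B => A ⊆ B ∧ B ⊂ C) with hs
  have hne : s.Nonempty := ⟨A, by simp [hs, hA, h]⟩
  obtain ⟨B, hB, hmax⟩ := s.exists_max_image Finset.card hne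
  simp only [hs, Finset.mem_filter] at hB
  refine ⟨B, ⟨hB.1, hC, hB.2.2, ?_⟩, hB.2.1⟩
  rintro ⟨B', hB', h1, h2⟩
  have hB's : B' ∈ s := by
    simp only [hs, Finset.mem_filter]
    exact ⟨hB', hB.2.1.trans h1.subset, h2⟩
  exact absurd (Finset.card_lt_card h1) (not_lt.mpr (hmax B' hB's))

lemma RTree.child_disjoint {A B C : Finset (Fin n)} (h1 : T.IsChild A C) (h2 : T.IsChild B C)
    (hne : A ≠ B) {a : Fin n} (haA : a ∈ A) (haB : a ∈ B) : False := by
  rcases T.comparable h1.1 h2.1 haA haB with h | h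
  · exact h1.2.2.2 ⟨B, h2.1, lt_of_le_of_ne h hne, h2.2.2.1⟩
  · exact h2.2.2.2 ⟨A, h1.1, lt_of_le_of_ne h (Ne.symm hne), h1.2.2.1⟩

lemma RTree.si_iff {C : Finset (Fin n)} {x y z : Fin n} :
    T.StrictlyInduces C x y z ↔
      C ∈ T.clusters ∧ x ∈ C ∧ y ∈ C ∧ z ∉ C ∧ x ≠ y ∧
        ∀ C' ∈ T.clusters, x ∈ C' → y ∈ C' → C ⊆ C' := by
  constructor
  · rintro ⟨hc, hnu, hx, hy, hz, A, B, hA, hB, hAB, hxA, hyB⟩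
    refine ⟨hc, hx, hy, hz, ?_, ?_⟩
    · rintro rfl
      exact T.child_disjoint hA hB hAB hxA hyB
    · intro C' hC' hxC' hyC'
      rcases T.comparable hc hC' hx hxC' with h | h
      · exact h
      · rcases T.comparable hC' hA.1 hxC' hxA with h1 | h1
        · exact absurd (h1 hyC') (fun hyA => T.child_disjoint hA hB hAB hyA hyB)
        · by_cases hcc : C' = C
          · rw [← hcc]
          · have hAne : A ≠ C' := by
              rintro rfl
              exact T.child_disjoint hA hB hAB hyC' hyB
            exact absurd ⟨C', hC', lt_of_le_of_ne h1 hAne, lt_of_le_of_ne h hcc⟩ hA.2.2.2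
  · rintro ⟨hc, hx, hy, hz, hxy, hmin⟩
    refine ⟨hc, fun h => hz (h ▸ Finset.mem_univ z), hx, hy, hz, ?_⟩
    have hssx : ({x} : Finset (Fin n)) ⊂ C := by
      rw [Finset.ssubset_iff_subset_ne]
      refine ⟨Finset.singleton_subset_iff.mpr hx, ?_⟩
      intro h
      exact hxy (Finset.mem_singleton.mp (h ▸ hy)).symm
    have hssy : ({y} : Finset (Fin n)) ⊂ C := by
      rw [Finset.ssubset_iff_subset_ne]
      refine ⟨Finset.singleton_subset_iff.mpr hy, ?_⟩
      intro h
      exact hxy (Finset.mem_singleton.mp (h ▸ hx))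
    obtain ⟨A, hAch, hxA⟩ := T.exists_child (T.singleton_mem x) hc hssx
    obtain ⟨B, hBch, hyB⟩ := T.exists_child (T.singleton_mem y) hc hssy
    have hxA' : x ∈ A := hxA (Finset.mem_singleton_self x)
    have hyB' : y ∈ B := hyB (Finset.mem_singleton_self y)
    refine ⟨A, B, hAch, hBch, ?_, hxA', hyB'⟩
    rintro rfl
    exact hAch.2.2.1.not_subset (hmin A hAch.1 hxA' hyB')

lemma RTree.si_inter {C : Finset (Fin n)} {x y z : Fin n} (h : T.StrictlyInduces C x y z) :
    C ∩ ({x, y, z} : Finset (Fin n)) = {x, y} := by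
  obtain ⟨hc, _, hx, hy, hz, _⟩ := h
  ext t
  simp only [Finset.mem_inter, Finset.mem_insert, Finset.mem_singleton]
  constructor
  · rintro ⟨htC, rfl | rfl | rfl⟩ <;> tauto
  · rintro (rfl | rfl) <;> tauto

lemma RTree.pair_unique {C C' X : Finset (Fin n)} (hC : C ∈ T.clusters) (hC' : C' ∈ T.clusters)
    (hX : X.card = 3) (h2 : (C ∩ X).card = 2) (h2' : (C' ∩ X).card = 2) : C ∩ X = C' ∩ X := by
  have hsub : (C ∩ X) ∪ (C' ∩ X) ⊆ X :=
    Finset.union_subset Finset.inter_subset_right Finset.inter_subset_right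
  have hnd : ¬ Disjoint (C ∩ X) (C' ∩ X) := by
    intro hd
    have h4 := Finset.card_union_of_disjoint hd
    have hle := Finset.card_le_card hsub
    omega
  obtain ⟨a, haC, haC'⟩ := Finset.not_disjoint_iff.mp hnd
  rcases T.comparable hC hC' (Finset.mem_inter.mp haC).1 (Finset.mem_inter.mp haC').1 with h | h
  · exact Finset.eq_of_subset_of_card_le
      (Finset.inter_subset_inter h (Finset.Subset.refl X)) (by omega)
  · exact (Finset.eq_of_subset_of_card_le
      (Finset.inter_subset_inter h (Finset.Subset.refl X)) (by omega)).symm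

lemma restrict_mem_iff {X C : Finset (Fin n)} (hX : X.card = 3)
    (hC : C ∈ T.clusters) (h2 : (C ∩ X).card = 2) (Y : Finset (Fin n)) :
    Y ∈ famRestrict T.clusters X ↔ Y ⊆ X ∧ (Y.card = 1 ∨ Y = C ∩ X ∨ Y = X) := by
  simp only [famRestrict, Finset.mem_filter, Finset.mem_image]
  constructor
  · rintro ⟨⟨C', hC', rfl⟩, hne⟩
    have hsub : C' ∩ X ⊆ X := Finset.inter_subset_right
    refine ⟨hsub, ?_⟩
    have hcard : (C' ∩ X).card ≤ 3 := hX ▸ Finset.card_le_card hsub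
    have hpos : 1 ≤ (C' ∩ X).card :=
      Finset.card_pos.mpr (Finset.nonempty_iff_ne_empty.mpr hne)
    have h123 : (C' ∩ X).card = 1 ∨ (C' ∩ X).card = 2 ∨ (C' ∩ X).card = 3 := by omega
    rcases h123 with h | h | h
    · exact Or.inl h
    · exact Or.inr (Or.inl (T.pair_unique hC' hC hX h h2))
    · exact Or.inr (Or.inr (Finset.eq_of_subset_of_card_le hsub (by omega)))
  · rintro ⟨hsub, h1 | rfl | rfl⟩
    · obtain ⟨t, rfl⟩ := Finset.card_eq_one.mp h1
      refine ⟨⟨{t}, T.singleton_mem t, ?_⟩, by simp⟩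
      exact Finset.inter_eq_left.mpr hsub
    · refine ⟨⟨C, hC, rfl⟩, ?_⟩
      intro h
      rw [h] at h2
      simp at h2
    · refine ⟨⟨Finset.univ, T.univ_mem, by simp⟩, ?_⟩
      intro h
      rw [h] at hX
      simp at hX

end Helpers

/-- **Lemma.**  For two rooted phylogenies `T₁` and `T₂` over the same taxon set,
`|S(T₁,T₂)| = Σ s(u,v)`, the sum ranging over all internal non-root nodes `u` of
`T₁` and all internal non-root nodes `v` of `T₂` (identified with their clusters:
the clusters of cardinality at least `2` other than the whole leaf set). -/
theorem card_setS_eq_sum_sCount (n : ℕ) (T₁ T₂ : RTree n) :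
    (RTree.setS T₁ T₂).card =
      ∑ C ∈ T₁.clusters.filter (fun C => 2 ≤ C.card ∧ C ≠ Finset.univ),
        ∑ D ∈ T₂.clusters.filter (fun D => 2 ≤ D.card ∧ D ≠ Finset.univ),
          sCount T₁ T₂ C D := by
  classical
  set s₁ := T₁.clusters.filter (fun C => 2 ≤ C.card ∧ C ≠ Finset.univ) with hs₁
  set s₂ := T₂.clusters.filter (fun D => 2 ≤ D.card ∧ D ≠ Finset.univ) with hs₂
  set Q : Finset (Fin n) → Finset (Fin n) → Finset (Fin n) → Prop :=
    fun C D X => ∃ x y z : Fin n, X = {x, y, z} ∧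
      T₁.StrictlyInduces C x y z ∧ T₂.StrictlyInduces D x y z with hQ
  set P : Finset (Fin n) → Prop := fun X =>
    famResolved T₁.clusters X ∧ famResolved T₂.clusters X ∧
      famRestrict T₁.clusters X = famRestrict T₂.clusters X with hP
  -- Q implies P
  have hQP : ∀ X ∈ triplets n, ∀ C D, Q C D X → P X := by
    intro X hX C D hq
    have hX3 : X.card = 3 := (Finset.mem_powersetCard.mp hX).2
    obtain ⟨x, y, z, hXeq, h1, h2⟩ := hq
    have h1' := (T₁.si_iff).mp h1
    have h2' := (T₂.si_iff).mp h2
    have hxy : x ≠ y := h1'.2.2.2.2.1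
    have hC : C ∩ X = {x, y} := by rw [hXeq]; exact T₁.si_inter h1
    have hD : D ∩ X = {x, y} := by rw [hXeq]; exact T₂.si_inter h2
    have hCc : (C ∩ X).card = 2 := by rw [hC, Finset.card_pair hxy]
    have hDc : (D ∩ X).card = 2 := by rw [hD, Finset.card_pair hxy]
    refine ⟨⟨C, h1'.1, hCc⟩, ⟨D, h2'.1, hDc⟩, ?_⟩
    ext Y
    rw [restrict_mem_iff T₁ hX3 h1'.1 hCc, restrict_mem_iff T₂ hX3 h2'.1 hDc, hC, hD]
  have key : ∀ X ∈ triplets n,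
      (∑ C ∈ s₁, ∑ D ∈ s₂, if Q C D X then 1 else 0) = if P X then (1 : ℕ) else 0 := by
    intro X hX
    have hX3 : X.card = 3 := (Finset.mem_powersetCard.mp hX).2
    by_cases hp : P X
    · obtain ⟨⟨C₀, hC₀, hc2⟩, _, hre⟩ := id hp
      obtain ⟨a, b, hab, hC₀X⟩ := Finset.card_eq_two.mp hc2
      have haC₀ : a ∈ C₀ ∧ a ∈ X := by
        have : a ∈ C₀ ∩ X := by rw [hC₀X]; simp
        exact Finset.mem_inter.mp this
      have hbC₀ : b ∈ C₀ ∧ b ∈ X := by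
        have : b ∈ C₀ ∩ X := by rw [hC₀X]; simp
        exact Finset.mem_inter.mp this
      have hsubX : ({a, b} : Finset (Fin n)) ⊆ X := hC₀X ▸ Finset.inter_subset_right
      have hcd : (X \ {a, b}).card = 1 := by
        rw [Finset.card_sdiff_of_subset hsubX, hX3, Finset.card_pair hab]
      obtain ⟨c, hc⟩ := Finset.card_eq_one.mp hcd
      have hcmem : c ∈ X \ ({a, b} : Finset (Fin n)) := hc ▸ Finset.mem_singleton_self c
      have hcX : c ∈ X := (Finset.mem_sdiff.mp hcmem).1
      have hcab : c ≠ a ∧ c ≠ b := by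
        have := (Finset.mem_sdiff.mp hcmem).2
        simp only [Finset.mem_insert, Finset.mem_singleton] at this
        tauto
      have hXabc : X = {a, b, c} := by
        have hu : ({a, b} : Finset (Fin n)) ∪ (X \ {a, b}) = X :=
          Finset.union_sdiff_of_subset hsubX
        rw [hc] at hu
        rw [← hu]
        ext t
        simp only [Finset.mem_union, Finset.mem_insert, Finset.mem_singleton]
        tauto
      -- a cluster of T₂ inducing the same pair
      have hmem1 : ({a, b} : Finset (Fin n)) ∈ famRestrict T₁.clusters X := by
        rw [famRestrict, Finset.mem_filter, Finset.mem_image]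
        exact ⟨⟨C₀, hC₀, hC₀X⟩, by simp⟩
      have hmem2 : ({a, b} : Finset (Fin n)) ∈ famRestrict T₂.clusters X := hre ▸ hmem1
      obtain ⟨D', hD', hD'X⟩ : ∃ D' ∈ T₂.clusters, D' ∩ X = {a, b} := by
        rw [famRestrict, Finset.mem_filter, Finset.mem_image] at hmem2
        obtain ⟨⟨D', hh1, hh2⟩, _⟩ := hmem2
        exact ⟨D', hh1, hh2⟩
      have haD' : a ∈ D' := by
        have : a ∈ D' ∩ X := by rw [hD'X]; simp
        exact (Finset.mem_inter.mp this).1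
      have hbD' : b ∈ D' := by
        have : b ∈ D' ∩ X := by rw [hD'X]; simp
        exact (Finset.mem_inter.mp this).1
      obtain ⟨M₁, hM₁c, haM₁, hbM₁, hM₁min⟩ := T₁.exists_lca a b
      obtain ⟨M₂, hM₂c, haM₂, hbM₂, hM₂min⟩ := T₂.exists_lca a b
      have hcC₀ : c ∉ C₀ := by
        intro h
        have : c ∈ C₀ ∩ X := Finset.mem_inter.mpr ⟨h, hcX⟩
        rw [hC₀X] at this
        simp only [Finset.mem_insert, Finset.mem_singleton] at this
        tauto
      have hcD' : c ∉ D' := by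
        intro h
        have : c ∈ D' ∩ X := Finset.mem_inter.mpr ⟨h, hcX⟩
        rw [hD'X] at this
        simp only [Finset.mem_insert, Finset.mem_singleton] at this
        tauto
      have hcM₁ : c ∉ M₁ := fun h => hcC₀ (hM₁min C₀ hC₀ haC₀.1 hbC₀.1 h)
      have hcM₂ : c ∉ M₂ := fun h => hcD' (hM₂min D' hD' haD' hbD' h)
      have hSI₁ : T₁.StrictlyInduces M₁ a b c :=
        (T₁.si_iff).mpr ⟨hM₁c, haM₁, hbM₁, hcM₁, hab, hM₁min⟩
      have hSI₂ : T₂.StrictlyInduces M₂ a b c :=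
        (T₂.si_iff).mpr ⟨hM₂c, haM₂, hbM₂, hcM₂, hab, hM₂min⟩
      have hq : Q M₁ M₂ X := ⟨a, b, c, hXabc, hSI₁, hSI₂⟩
      have hM₁s : M₁ ∈ s₁ := by
        rw [hs₁, Finset.mem_filter]
        refine ⟨hM₁c, ?_, fun h => hcM₁ (h ▸ Finset.mem_univ c)⟩
        have hsub : ({a, b} : Finset (Fin n)) ⊆ M₁ := by
          intro t ht
          simp only [Finset.mem_insert, Finset.mem_singleton] at ht
          rcases ht with rfl | rfl <;> assumption
        have := Finset.card_le_card hsub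
        rwa [Finset.card_pair hab] at this
      have hM₂s : M₂ ∈ s₂ := by
        rw [hs₂, Finset.mem_filter]
        refine ⟨hM₂c, ?_, fun h => hcM₂ (h ▸ Finset.mem_univ c)⟩
        have hsub : ({a, b} : Finset (Fin n)) ⊆ M₂ := by
          intro t ht
          simp only [Finset.mem_insert, Finset.mem_singleton] at ht
          rcases ht with rfl | rfl <;> assumption
        have := Finset.card_le_card hsub
        rwa [Finset.card_pair hab] at this
      -- uniqueness
      have huniq : ∀ C D, Q C D X → C = M₁ ∧ D = M₂ := by
        intro C D hq'
        obtain ⟨x, y, z, hXeq, h1, h2⟩ := hq'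
        have h1' := (T₁.si_iff).mp h1
        have h2' := (T₂.si_iff).mp h2
        have hxy : x ≠ y := h1'.2.2.2.2.1
        have hCX : C ∩ X = {x, y} := by rw [hXeq]; exact T₁.si_inter h1
        have hDX : D ∩ X = {x, y} := by rw [hXeq]; exact T₂.si_inter h2
        have hCc : (C ∩ X).card = 2 := by rw [hCX, Finset.card_pair hxy]
        have hpair : ({x, y} : Finset (Fin n)) = {a, b} := by
          have := T₁.pair_unique h1'.1 hC₀ hX3 hCc hc2
          rw [hCX, hC₀X] at this
          exact this
        have haxy : a ∈ ({x, y} : Finset (Fin n)) := by rw [hpair]; simp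
        have hbxy : b ∈ ({x, y} : Finset (Fin n)) := by rw [hpair]; simp
        have hxab : x ∈ ({a, b} : Finset (Fin n)) := by rw [← hpair]; simp
        have hyab : y ∈ ({a, b} : Finset (Fin n)) := by rw [← hpair]; simp
        have hmemM : ∀ {M : Finset (Fin n)}, a ∈ M → b ∈ M → x ∈ M ∧ y ∈ M := by
          intro M ha hb
          constructor
          · rcases Finset.mem_insert.mp hxab with rfl | hx'
            · exact ha
            · rw [Finset.mem_singleton.mp hx']; exact hb
          · rcases Finset.mem_insert.mp hyab with rfl | hy'
            · exact ha
            · rw [Finset.mem_singleton.mp hy']; exact hb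
        have hmemC : ∀ {M : Finset (Fin n)}, x ∈ M → y ∈ M → a ∈ M ∧ b ∈ M := by
          intro M hx hy
          constructor
          · rcases Finset.mem_insert.mp haxy with rfl | ha'
            · exact hx
            · rw [Finset.mem_singleton.mp ha']; exact hy
          · rcases Finset.mem_insert.mp hbxy with rfl | hb'
            · exact hx
            · rw [Finset.mem_singleton.mp hb']; exact hy
        constructor
        · have hM₁xy := hmemM haM₁ hbM₁
          have haC : a ∈ C ∧ b ∈ C := by
            have hxC : x ∈ C := h1'.2.1
            have hyC : y ∈ C := h1'.2.2.1
            exact hmemC hxC hyC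
          exact Finset.Subset.antisymm
            (h1'.2.2.2.2.2 M₁ hM₁c hM₁xy.1 hM₁xy.2)
            (hM₁min C h1'.1 haC.1 haC.2)
        · have hM₂xy := hmemM haM₂ hbM₂
          have haD : a ∈ D ∧ b ∈ D := hmemC h2'.2.1 h2'.2.2.1
          exact Finset.Subset.antisymm
            (h2'.2.2.2.2.2 M₂ hM₂c hM₂xy.1 hM₂xy.2)
            (hM₂min D h2'.1 haD.1 haD.2)
      rw [if_pos hp]
      rw [Finset.sum_eq_single_of_mem M₁ hM₁s, Finset.sum_eq_single_of_mem M₂ hM₂s,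
        if_pos hq]
      · intro D hD hDne
        rw [if_neg]
        intro hq'
        exact hDne (huniq M₁ D hq').2
      · intro C hC hCne
        apply Finset.sum_eq_zero
        intro D hD
        rw [if_neg]
        intro hq'
        exact hCne (huniq C D hq').1
    · rw [if_neg hp]
      apply Finset.sum_eq_zero
      intro C hC
      apply Finset.sum_eq_zero
      intro D hD
      rw [if_neg]
      intro hq
      exact hp (hQP X hX C D hq)
  have hsC : ∀ C D, sCount T₁ T₂ C D = ∑ X ∈ triplets n, if Q C D X then 1 else 0 := by
    intro C D
    rw [sCount, Finset.card_filter]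
  calc (RTree.setS T₁ T₂).card
      = ∑ X ∈ triplets n, if P X then 1 else 0 := by
        rw [RTree.setS, famSetS, Finset.card_filter]
    _ = ∑ X ∈ triplets n, ∑ C ∈ s₁, ∑ D ∈ s₂, if Q C D X then 1 else 0 :=
        (Finset.sum_congr rfl key).symm
    _ = ∑ C ∈ s₁, ∑ X ∈ triplets n, ∑ D ∈ s₂, if Q C D X then 1 else 0 :=
        Finset.sum_comm
    _ = ∑ C ∈ s₁, ∑ D ∈ s₂, ∑ X ∈ triplets n, if Q C D X then 1 else 0 :=
        Finset.sum_congr rfl fun C _ => Finset.sum_comm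
    _ = ∑ C ∈ s₁, ∑ D ∈ s₂, sCount T₁ T₂ C D :=
        Finset.sum_congr rfl fun C _ => Finset.sum_congr rfl fun D _ => (hsC C D).symm
end
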